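/- Let $\ell>0$, let $\eta:[0,\ell]\to\mathbb{R}$ be continuous with $\eta>0$, let $f:[0,\ell]\to\mathbb{R}$ be bounded, measurable and nonnegative, and let $\bar t\in(0,\ell)$ satisfy $\int_0^{\bar t}\frac{dr}{\eta(r)}=\int_{\bar t}^{\ell}\frac{dr}{\eta(r)}$. Define $s:[0,\ell]\to\mathbb{R}$ by $s(t)=1$ for $t<\bar t$ and $s(t)=-1$ for $t>\bar t$ (so that $s=\eta\,d'$ a.e., where $d(t)=\min(\int_0^t 1/\eta,\int_t^\ell 1/\eta)$), and define $v:[0,\ell]\to\mathbb{R}$ by $v(t)=\int_t^{\bar t}f(r)\,dr$ for $t\le\bar t$ and $v(t)=\int_{\bar t}^{t}f(r)\,dr$ for $t\ge\bar t$. Then $v$ is Lipschitz, $v\ge0$, $v(\bar t)=0$, and for every Lipschitz function $\psi:[0,\ell]\to\mathbb{R}$ with $\psi(0)=\psi(\ell)=0$ one has $\int_0^{\ell}v(t)\,s(t)\,\psi'(t)\,dt=\int_0^{\ell}f(t)\,\psi(t)\,dt$. -/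

import Mathlib

open MeasureTheory intervalIntegral Filter

lemma lip_deriv_abs_le {K : NNReal} {g : ℝ → ℝ} (hg : LipschitzWith K g) (t : ℝ) :
    |deriv g t| ≤ K := by
  by_cases h : DifferentiableAt ℝ g t
  · have h1 : (fderiv ℝ g t : ℝ → ℝ) 1 = deriv g t := fderiv_apply_one_eq_deriv
    have h2 : ‖fderiv ℝ g t‖ ≤ K := norm_fderiv_le_of_lipschitz ℝ hg
    calc |deriv g t| = ‖(fderiv ℝ g t : ℝ → ℝ) 1‖ := by rw [h1, Real.norm_eq_abs]
      _ ≤ ‖fderiv ℝ g t‖ * ‖(1:ℝ)‖ := (fderiv ℝ g t).le_opNorm 1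
      _ ≤ K := by simpa using h2
  · rw [deriv_zero_of_not_differentiableAt h]; simp

lemma lip_ftc {K : NNReal} {g : ℝ → ℝ} (hg : LipschitzWith K g) {a b : ℝ} (hab : a ≤ b) :
    ∫ t in a..b, deriv g t = g b - g a := by
  have gcont : Continuous g := hg.continuous
  set u : ℕ → ℝ := fun n => 1 / (n + 1 : ℝ) with hu
  have hupos : ∀ n, 0 < u n := fun n => by positivity
  have hulim : Tendsto u atTop (nhds 0) := tendsto_one_div_add_atTop_nhds_zero_nat
  have hseq : ∀ c : ℝ, Tendsto (fun n => c + u n) atTop (nhdsWithin c {c}ᶜ) := by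
    intro c
    apply tendsto_nhdsWithin_of_tendsto_nhds_of_eventually_within
    · simpa using (tendsto_const_nhds.add hulim)
    · filter_upwards with n
      simp only [Set.mem_compl_iff, Set.mem_singleton_iff]
      have := hupos n; intro h; nlinarith [h]
  -- limit at a point of the averaged integrals
  have key : ∀ c : ℝ, Tendsto (fun n => (u n)⁻¹ * ∫ t in c..(c + u n), g t)
      atTop (nhds (g c)) := by
    intro c
    have hG : HasDerivAt (fun x => ∫ t in c..x, g t) (g c) c := by
      exact integral_hasDerivAt_right (gcont.intervalIntegrable c c)
        gcont.stronglyMeasurable.stronglyMeasurableAtFilter gcont.continuousAt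
    have hslope := hasDerivAt_iff_tendsto_slope.mp hG
    have := hslope.comp (hseq c)
    convert this using 2 with n
    simp only [Function.comp, slope_def_field]
    rw [intervalIntegral.integral_same, div_eq_inv_mul]
    congr 1
    · congr 1; ring
    · ring
  -- difference quotients
  set F : ℕ → ℝ → ℝ := fun n t => (u n)⁻¹ * (g (t + u n) - g t) with hF
  have hFcont : ∀ n, Continuous (F n) := fun n =>
    continuous_const.mul ((gcont.comp (continuous_id.add continuous_const)).sub gcont)
  have hbound : ∀ n t, ‖F n t‖ ≤ K := by
    intro n t
    have h1 : dist (g (t + u n)) (g t) ≤ K * dist (t + u n) t := hg.dist_le_mul _ _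
    rw [Real.dist_eq, Real.dist_eq, add_sub_cancel_left, abs_of_pos (hupos n)] at h1
    rw [Real.norm_eq_abs, hF]
    simp only
    rw [abs_mul, abs_inv, abs_of_pos (hupos n), inv_mul_le_iff₀ (hupos n)]
    linarith [h1]
  have hae : ∀ᵐ t ∂(volume.restrict (Set.Ioc a b)),
      Tendsto (fun n => F n t) atTop (nhds (deriv g t)) := by
    apply ae_restrict_of_ae
    filter_upwards [hg.ae_differentiableAt] with t ht
    have hslope := hasDerivAt_iff_tendsto_slope.mp ht.hasDerivAt
    have := hslope.comp (hseq t)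
    convert this using 2 with n
    simp only [Function.comp, slope_def_field, hF]
    rw [div_eq_inv_mul, add_sub_cancel_left]
  have hdc := MeasureTheory.tendsto_integral_of_dominated_convergence
    (μ := volume.restrict (Set.Ioc a b)) (F := F) (f := deriv g) (fun _ => (K : ℝ))
    (fun n => (hFcont n).aestronglyMeasurable)
    (integrableOn_const measure_Ioc_lt_top.ne)
    (fun n => ae_of_all _ (fun t => hbound n t)) hae
  -- compute the integrals of difference quotients
  have hcint : ∀ c : ℝ, Continuous fun t : ℝ => g (t + c) := fun c => by fun_prop
  have hcomp : ∀ n, ∫ t in Set.Ioc a b, F n t =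
      ((u n)⁻¹ * ∫ t in b..(b + u n), g t) - (u n)⁻¹ * ∫ t in a..(a + u n), g t := by
    intro n
    rw [← intervalIntegral.integral_of_le hab]
    have i1 : ∫ t in a..b, F n t = (u n)⁻¹ * ∫ t in a..b, (g (t + u n) - g t) := by
      rw [← intervalIntegral.integral_const_mul]
    have i2 : ∫ t in a..b, (g (t + u n) - g t) =
        (∫ t in (a + u n)..(b + u n), g t) - ∫ t in a..b, g t := by
      rw [intervalIntegral.integral_sub
        ((hcint (u n)).intervalIntegrable a b)
        (gcont.intervalIntegrable a b)]
      congr 1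
      exact intervalIntegral.integral_comp_add_right g (u n)
    have A : (∫ t in a..(a + u n), g t) + ∫ t in (a + u n)..(b + u n), g t
        = ∫ t in a..(b + u n), g t :=
      integral_add_adjacent_intervals (gcont.intervalIntegrable _ _) (gcont.intervalIntegrable _ _)
    have B : (∫ t in a..b, g t) + ∫ t in b..(b + u n), g t = ∫ t in a..(b + u n), g t :=
      integral_add_adjacent_intervals (gcont.intervalIntegrable _ _) (gcont.intervalIntegrable _ _)
    rw [i1, i2]
    have : (∫ t in (a + u n)..(b + u n), g t) - ∫ t in a..b, g t
        = (∫ t in b..(b + u n), g t) - ∫ t in a..(a + u n), g t := by linarith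
    rw [this, mul_sub]
  have hlim2 : Tendsto (fun n => ∫ t in Set.Ioc a b, F n t) atTop (nhds (g b - g a)) := by
    simp only [hcomp]
    exact (key b).sub (key a)
  have := tendsto_nhds_unique hdc hlim2
  rw [intervalIntegral.integral_of_le hab, this]

theorem sandpile_existence_single_edge (ℓ : ℝ) (hℓ : 0 < ℓ)
    (η f : ℝ → ℝ)
    (hη : ContinuousOn η (Set.Icc 0 ℓ)) (hηpos : ∀ t ∈ Set.Icc 0 ℓ, 0 < η t)
    (hfmeas : Measurable f) (hfnn : ∀ t ∈ Set.Icc 0 ℓ, 0 ≤ f t)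
    (hfbd : ∃ C : ℝ, ∀ t ∈ Set.Icc 0 ℓ, f t ≤ C)
    (tbar : ℝ) (htbar : tbar ∈ Set.Ioo 0 ℓ)
    (hbal : (∫ r in (0:ℝ)..tbar, 1 / η r) = ∫ r in tbar..ℓ, 1 / η r)
    (s : ℝ → ℝ)
    (hs : ∀ t : ℝ, (t < tbar → s t = 1) ∧ (tbar < t → s t = -1))
    (v : ℝ → ℝ)
    (hvdef : ∀ t : ℝ, (t ≤ tbar → v t = ∫ r in t..tbar, f r) ∧
      (tbar ≤ t → v t = ∫ r in tbar..t, f r)) :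
    (∃ K : NNReal, LipschitzOnWith K v (Set.Icc 0 ℓ)) ∧
    (∀ t ∈ Set.Icc 0 ℓ, 0 ≤ v t) ∧
    v tbar = 0 ∧
    (∀ ψ : ℝ → ℝ, (∃ K : NNReal, LipschitzOnWith K ψ (Set.Icc 0 ℓ)) →
      ψ 0 = 0 → ψ ℓ = 0 →
      ∫ t in Set.Ioo 0 ℓ, v t * s t * deriv ψ t = ∫ t in Set.Ioo 0 ℓ, f t * ψ t) := by
  obtain ⟨C, hC⟩ := hfbd
  set C' : ℝ := max C 0 with hC'def
  have hC'nn : 0 ≤ C' := le_max_right _ _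
  have habs : ∀ t ∈ Set.Icc 0 ℓ, |f t| ≤ C' := fun t ht => by
    rw [abs_of_nonneg (hfnn t ht)]; exact le_max_of_le_left (hC t ht)
  obtain ⟨ht0, htl⟩ := htbar
  have htbarIcc : tbar ∈ Set.Icc 0 ℓ := ⟨ht0.le, htl.le⟩
  have h0Icc : (0:ℝ) ∈ Set.Icc 0 ℓ := ⟨le_rfl, hℓ.le⟩
  have hlIcc : ℓ ∈ Set.Icc 0 ℓ := ⟨hℓ.le, le_rfl⟩
  have hfi : IntegrableOn f (Set.Icc 0 ℓ) := by
    apply Measure.integrableOn_of_bounded measure_Icc_lt_top.ne hfmeas.aestronglyMeasurable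
    filter_upwards [ae_restrict_mem measurableSet_Icc] with t ht
    rw [Real.norm_eq_abs]; exact habs t ht
  have hII : ∀ a ∈ Set.Icc 0 ℓ, ∀ b ∈ Set.Icc 0 ℓ, IntervalIntegrable f volume a b := by
    intro a ha b hb
    exact (hfi.mono_set (Set.uIcc_subset_Icc ha hb)).intervalIntegrable
  have hIb : ∀ a ∈ Set.Icc 0 ℓ, ∀ b ∈ Set.Icc 0 ℓ, |∫ r in a..b, f r| ≤ C' * |b - a| := by
    intro a ha b hb
    rw [← Real.norm_eq_abs]
    apply intervalIntegral.norm_integral_le_of_norm_le_const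
    intro x hx
    rw [Real.norm_eq_abs]
    exact habs x (Set.uIoc_subset_uIcc.trans (Set.uIcc_subset_Icc ha hb) hx)
  -- nonnegativity
  have hvnn : ∀ t ∈ Set.Icc 0 ℓ, 0 ≤ v t := by
    intro t ht
    rcases le_total t tbar with h | h
    · rw [(hvdef t).1 h]
      exact intervalIntegral.integral_nonneg h
        (fun r hr => hfnn r ⟨le_trans ht.1 hr.1, le_trans hr.2 htbarIcc.2⟩)
    · rw [(hvdef t).2 h]
      exact intervalIntegral.integral_nonneg h
        (fun r hr => hfnn r ⟨le_trans htbarIcc.1 hr.1, le_trans hr.2 ht.2⟩)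
  have hv0 : v tbar = 0 := by
    rw [(hvdef tbar).1 le_rfl, intervalIntegral.integral_same]
  -- Lipschitz
  have hkey : ∀ a ∈ Set.Icc 0 ℓ, ∀ b ∈ Set.Icc 0 ℓ, a ≤ b → |v a - v b| ≤ C' * (b - a) := by
    intro a ha b hb hab
    have hba : |(b:ℝ) - a| = b - a := abs_of_nonneg (sub_nonneg.2 hab)
    rcases le_total b tbar with h | h
    · rw [(hvdef a).1 (hab.trans h), (hvdef b).1 h]
      have hadd : (∫ r in a..b, f r) + ∫ r in b..tbar, f r = ∫ r in a..tbar, f r :=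
        intervalIntegral.integral_add_adjacent_intervals (hII a ha b hb) (hII b hb tbar htbarIcc)
      have h2 : (∫ r in a..tbar, f r) - ∫ r in b..tbar, f r = ∫ r in a..b, f r := by linarith
      rw [h2]
      calc |∫ r in a..b, f r| ≤ C' * |b - a| := hIb a ha b hb
        _ = C' * (b - a) := by rw [hba]
    · rcases le_total tbar a with h' | h'
      · rw [(hvdef a).2 h', (hvdef b).2 (h'.trans hab)]
        have hadd : (∫ r in tbar..a, f r) + ∫ r in a..b, f r = ∫ r in tbar..b, f r :=
          intervalIntegral.integral_add_adjacent_intervals (hII tbar htbarIcc a ha) (hII a ha b hb)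
        have h2 : (∫ r in tbar..a, f r) - ∫ r in tbar..b, f r = -∫ r in a..b, f r := by linarith
        rw [h2, abs_neg]
        calc |∫ r in a..b, f r| ≤ C' * |b - a| := hIb a ha b hb
          _ = C' * (b - a) := by rw [hba]
      · rw [(hvdef a).1 h', (hvdef b).2 h]
        have h1 := hIb a ha tbar htbarIcc
        have h2 := hIb tbar htbarIcc b hb
        rw [abs_of_nonneg (sub_nonneg.2 h')] at h1
        rw [abs_of_nonneg (sub_nonneg.2 h)] at h2
        calc |(∫ r in a..tbar, f r) - ∫ r in tbar..b, f r|
            ≤ |∫ r in a..tbar, f r| + |∫ r in tbar..b, f r| := abs_sub _ _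
          _ ≤ C' * (tbar - a) + C' * (b - tbar) := add_le_add h1 h2
          _ = C' * (b - a) := by ring
  have hlip : LipschitzOnWith C'.toNNReal v (Set.Icc 0 ℓ) := by
    apply LipschitzOnWith.of_dist_le_mul
    intro x hx y hy
    rw [Real.dist_eq, Real.dist_eq, Real.coe_toNNReal _ hC'nn]
    rcases le_total x y with h | h
    · rw [abs_sub_comm x y, abs_of_nonneg (sub_nonneg.2 h)]
      exact hkey x hx y hy h
    · rw [abs_of_nonneg (sub_nonneg.2 h), abs_sub_comm (v x)]
      exact hkey y hy x hx h
  refine ⟨⟨C'.toNNReal, hlip⟩, hvnn, hv0, ?_⟩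
  -- weak formulation
  intro ψ hψlip hψ0 hψl
  obtain ⟨K, hψK⟩ := hψlip
  obtain ⟨g, hgK, hEq⟩ := hψK.extend_real
  have hgcont : Continuous g := hgK.continuous
  have hIooIcc : Set.Ioo (0:ℝ) ℓ ⊆ Set.Icc 0 ℓ := Set.Ioo_subset_Icc_self
  have hgd : ∀ t ∈ Set.Ioo (0:ℝ) ℓ, deriv ψ t = deriv g t := by
    intro t ht
    apply Filter.EventuallyEq.deriv_eq
    filter_upwards [Icc_mem_nhds ht.1 ht.2] with x hx
    exact hEq hx
  have hgmeas : Measurable (deriv g) := measurable_deriv g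
  have hgbd : ∀ t, |deriv g t| ≤ K := lip_deriv_abs_le hgK
  have hg0 : g 0 = 0 := by rw [← hEq h0Icc]; exact hψ0
  have hgl : g ℓ = 0 := by rw [← hEq hlIcc]; exact hψl
  set F : ℝ → ℝ := fun t => ∫ r in (0:ℝ)..t, f r with hFdef
  set c : ℝ := F tbar with hcdef
  -- Step A : rewrite the integrand
  have hstep1 : ∫ t in Set.Ioo 0 ℓ, v t * s t * deriv ψ t
      = ∫ t in Set.Ioo 0 ℓ, (c - F t) * deriv g t := by
    apply setIntegral_congr_ae measurableSet_Ioo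
    have hne : ∀ᵐ t : ℝ, t ≠ tbar := by
      refine (ae_iff).2 ?_
      simpa using measure_singleton tbar
    filter_upwards [hne] with t hnet hmem
    have hsplit : ∀ u ∈ Set.Icc (0:ℝ) ℓ, (F u) + ∫ r in u..tbar, f r = c := fun u hu =>
      intervalIntegral.integral_add_adjacent_intervals (hII 0 h0Icc u hu) (hII u hu tbar htbarIcc)
    rcases lt_or_gt_of_ne hnet with h | h
    · rw [(hs t).1 h, (hvdef t).1 h.le, hgd t hmem, mul_one]
      congr 1
      have := hsplit t (hIooIcc hmem)
      linarith
    · rw [(hs t).2 h, (hvdef t).2 h.le, hgd t hmem]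
      have h1 := hsplit t (hIooIcc hmem)
      have h2 : (∫ r in t..tbar, f r) = -∫ r in tbar..t, f r :=
        intervalIntegral.integral_symm tbar t
      have h3 : c - F t = -∫ r in tbar..t, f r := by linarith
      rw [h3]; ring
  -- integrability facts
  have hgdint : IntegrableOn (deriv g) (Set.Ioo 0 ℓ) := by
    apply Measure.integrableOn_of_bounded measure_Ioo_lt_top.ne hgmeas.aestronglyMeasurable
    exact ae_of_all _ fun t => by rw [Real.norm_eq_abs]; exact hgbd t
  have hFcont : ContinuousOn F (Set.Icc 0 ℓ) := by
    have := intervalIntegral.continuousOn_primitive_interval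
      (a := (0:ℝ)) (b := ℓ) (μ := volume) (f := f) (by rwa [Set.uIcc_of_le hℓ.le])
    rwa [Set.uIcc_of_le hℓ.le] at this
  have hFbd : ∀ t ∈ Set.Icc 0 ℓ, |F t| ≤ C' * ℓ := by
    intro t ht
    calc |F t| ≤ C' * |t - 0| := hIb 0 h0Icc t ht
      _ = C' * t := by rw [sub_zero, abs_of_nonneg ht.1]
      _ ≤ C' * ℓ := by nlinarith [ht.2]
  have hFmeas : AEStronglyMeasurable F (volume.restrict (Set.Ioo 0 ℓ)) :=
    (hFcont.mono hIooIcc).aestronglyMeasurable measurableSet_Ioo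
  have hFgint : IntegrableOn (fun t => F t * deriv g t) (Set.Ioo 0 ℓ) := by
    haveI : IsFiniteMeasure (volume.restrict (Set.Ioo (0:ℝ) ℓ)) :=
      ⟨by rw [Measure.restrict_apply_univ]; exact measure_Ioo_lt_top⟩
    apply Integrable.mono' (integrable_const (C' * ℓ * K))
      (hFmeas.mul (hgmeas.aestronglyMeasurable.restrict))
    filter_upwards [ae_restrict_mem measurableSet_Ioo] with t ht
    show |F t * deriv g t| ≤ C' * ℓ * K
    rw [abs_mul]
    have h1 := hFbd t (hIooIcc ht)
    have h2 := hgbd t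
    have := abs_nonneg (F t)
    have := abs_nonneg (deriv g t)
    nlinarith
  -- Step B : split the integral
  have hsplit2 : ∫ t in Set.Ioo 0 ℓ, (c - F t) * deriv g t
      = (c * ∫ t in Set.Ioo 0 ℓ, deriv g t) - ∫ t in Set.Ioo 0 ℓ, F t * deriv g t := by
    simp_rw [sub_mul]
    rw [integral_sub (hgdint.const_mul c) hFgint, MeasureTheory.integral_const_mul]
  -- Step C : the integral of deriv g vanishes
  have hI0 : ∫ t in Set.Ioo 0 ℓ, deriv g t = 0 := by
    have h := lip_ftc hgK hℓ.le
    rw [intervalIntegral.integral_of_le hℓ.le, integral_Ioc_eq_integral_Ioo] at h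
    rw [h, hgl, hg0, sub_zero]
  -- Step D : Fubini
  have hFrep : ∀ t ∈ Set.Ioo (0:ℝ) ℓ, F t = ∫ r in Set.Ioo 0 ℓ, (Set.Iio t).indicator f r := by
    intro t ht
    rw [setIntegral_indicator measurableSet_Iio]
    have hset : Set.Ioo 0 ℓ ∩ Set.Iio t = Set.Ioo 0 t := by
      ext x
      simp only [Set.mem_inter_iff, Set.mem_Ioo, Set.mem_Iio]
      exact ⟨fun h => ⟨h.1.1, h.2⟩, fun h => ⟨⟨h.1, h.2.trans ht.2⟩, h.2⟩⟩
    rw [hset, ← integral_Ioc_eq_integral_Ioo, ← intervalIntegral.integral_of_le ht.1.le]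
  -- integrability on the product space
  haveI : IsFiniteMeasure (volume.restrict (Set.Ioo (0:ℝ) ℓ)) :=
    ⟨by rw [Measure.restrict_apply_univ]; exact measure_Ioo_lt_top⟩
  have hprod : Integrable
      (Function.uncurry fun t r => (Set.Iio t).indicator f r * deriv g t)
      ((volume.restrict (Set.Ioo (0:ℝ) ℓ)).prod (volume.restrict (Set.Ioo (0:ℝ) ℓ))) := by
    have hmeas2 : Measurable fun p : ℝ × ℝ => (Set.Iio p.1).indicator f p.2 * deriv g p.1 := by
      have heq : (fun p : ℝ × ℝ => (Set.Iio p.1).indicator f p.2)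
          = Set.indicator {q : ℝ × ℝ | q.2 < q.1} (fun q => f q.2) := by
        ext p
        by_cases h : p.2 < p.1
        · simp [Set.indicator, h]
        · simp [Set.indicator, h]
      refine Measurable.mul ?_ (hgmeas.comp measurable_fst)
      rw [heq]
      exact (hfmeas.comp measurable_snd).indicator
        (measurableSet_lt measurable_snd measurable_fst)
    apply Integrable.mono' (integrable_const (C' * K)) hmeas2.aestronglyMeasurable
    rw [Measure.prod_restrict]
    filter_upwards [ae_restrict_mem (measurableSet_Ioo.prod measurableSet_Ioo)] with p hp
    show |(Set.Iio p.1).indicator f p.2 * deriv g p.1| ≤ C' * K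
    rw [abs_mul]
    have h1 : |(Set.Iio p.1).indicator f p.2| ≤ C' := by
      by_cases h : p.2 ∈ Set.Iio p.1
      · rw [Set.indicator_of_mem h]
        exact habs p.2 (hIooIcc hp.2)
      · rw [Set.indicator_of_notMem h]; simpa using hC'nn
    have h2 := hgbd p.1
    have := abs_nonneg ((Set.Iio p.1).indicator f p.2)
    have := abs_nonneg (deriv g p.1)
    nlinarith
  have hswap : ∫ t in Set.Ioo 0 ℓ, F t * deriv g t
      = ∫ r in Set.Ioo 0 ℓ, f r * (g ℓ - g r) := by
    calc ∫ t in Set.Ioo 0 ℓ, F t * deriv g t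
        = ∫ t in Set.Ioo 0 ℓ, ∫ r in Set.Ioo 0 ℓ,
            (Set.Iio t).indicator f r * deriv g t := by
          apply setIntegral_congr_fun measurableSet_Ioo
          intro t ht
          show F t * deriv g t = ∫ r in Set.Ioo 0 ℓ, (Set.Iio t).indicator f r * deriv g t
          rw [MeasureTheory.integral_mul_const, hFrep t ht]
      _ = ∫ r in Set.Ioo 0 ℓ, ∫ t in Set.Ioo 0 ℓ,
            (Set.Iio t).indicator f r * deriv g t := integral_integral_swap hprod
      _ = ∫ r in Set.Ioo 0 ℓ, f r * (g ℓ - g r) := by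
          apply setIntegral_congr_fun measurableSet_Ioo
          intro r hr
          have hptwise : ∀ t : ℝ, (Set.Iio t).indicator f r * deriv g t
              = f r * (Set.Ioi r).indicator (deriv g) t := by
            intro t
            by_cases h : r < t
            · rw [Set.indicator_of_mem (Set.mem_Iio.2 h), Set.indicator_of_mem (Set.mem_Ioi.2 h)]
              try ring
            · rw [Set.indicator_of_notMem (by simpa using h),
                Set.indicator_of_notMem (by simpa using h)]
              try ring
          simp_rw [hptwise]
          rw [MeasureTheory.integral_const_mul, setIntegral_indicator measurableSet_Ioi]
          have hset : Set.Ioo 0 ℓ ∩ Set.Ioi r = Set.Ioo r ℓ := by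
            ext x
            simp only [Set.mem_inter_iff, Set.mem_Ioo, Set.mem_Ioi]
            exact ⟨fun h => ⟨h.2, h.1.2⟩, fun h => ⟨⟨hr.1.trans h.1, h.2⟩, h.1⟩⟩
          rw [hset, ← integral_Ioc_eq_integral_Ioo, ← intervalIntegral.integral_of_le hr.2.le,
            lip_ftc hgK hr.2.le]
  -- conclusion
  rw [hstep1, hsplit2, hI0, mul_zero, hswap, zero_sub, ← MeasureTheory.integral_neg]
  apply setIntegral_congr_fun measurableSet_Ioo
  intro r hr
  show -(f r * (g ℓ - g r)) = f r * ψ r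
  rw [hgl, hEq (hIooIcc hr)]
  ring
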